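/- The integral ∫₁^u (ln(1 + 1/v))/(v ln 2) dv converges to π²/(12 ln 2) as u → ∞. -/

import Mathlib

open Filter MeasureTheory Real Set

-- eta(2) = π²/12
lemma eta_two : HasSum (fun n : ℕ => (-1 : ℝ) ^ n / ((n : ℝ) + 1) ^ 2) (Real.pi ^ 2 / 12) := by
  set g : ℕ → ℝ := fun n => 1 / ((n : ℝ) + 1) ^ 2 with hg_def
  have hg : HasSum g (Real.pi ^ 2 / 6) := by
    have h0 := hasSum_zeta_two
    have h1 : HasSum (fun n : ℕ => (1:ℝ) / ((n + 1 : ℕ) : ℝ) ^ 2) (Real.pi ^ 2 / 6) :=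
      (hasSum_nat_add_iff (f := fun n : ℕ => (1 : ℝ) / (n : ℝ) ^ 2) 1).2 (by simpa using h0)
    convert h1 using 2 with n
    push_cast
    simp only [g]
  set f : ℕ → ℝ := fun n => (-1 : ℝ) ^ n / ((n : ℝ) + 1) ^ 2 with hf_def
  have hfs : Summable f := by
    apply Summable.of_norm_bounded hg.summable
    intro n
    simp only [f, g, norm_div, norm_pow, norm_neg, norm_one, one_pow]
    rw [Real.norm_eq_abs, abs_of_nonneg (by positivity : (0:ℝ) ≤ (n:ℝ)+1)]
  have hsub : HasSum (fun n => g n - f n) (Real.pi ^ 2 / 6 - ∑' n, f n) :=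
    hg.sub hfs.hasSum
  have hodd : HasSum (fun n => g n - f n) (Real.pi ^ 2 / 12) := by
    have hid : (fun k : ℕ => g (2 * k + 1) - f (2 * k + 1)) = fun k : ℕ => (1/2) * g k := by
      ext k
      simp only [f, g]
      rw [Odd.neg_one_pow ⟨k, by ring⟩, show ((2*k+1:ℕ):ℝ) + 1 = 2*((k:ℝ)+1) by push_cast; ring,
        ]
      have hk : ((k:ℝ)+1) ≠ 0 := by positivity
      field_simp
      ring
    have hinj : Function.Injective (fun k : ℕ => 2 * k + 1) := by
      intro a b h; simpa using h
    have hcomp : HasSum ((fun n => g n - f n) ∘ fun k : ℕ => 2 * k + 1) (Real.pi ^ 2 / 12) := by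
      have he : ((fun n => g n - f n) ∘ fun k : ℕ => 2 * k + 1) = fun k : ℕ => (1/2) * g k := by
        ext k; exact congrFun hid k
      rw [he]
      convert hg.mul_left (1/2) using 1
      · rfl
      ring
    refine (Function.Injective.hasSum_iff hinj ?_).1 hcomp
    intro n hn
    have hne : Even n := by
      rcases Nat.even_or_odd n with h | h
      · exact h
      · exfalso; obtain ⟨k, hk⟩ := h; exact hn ⟨k, by simp; omega⟩
    simp only [g, f, hne.neg_one_pow]
    ring
  have : Real.pi ^ 2 / 6 - ∑' n, f n = Real.pi ^ 2 / 12 := hsub.unique hodd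
  have htsum : ∑' n, f n = Real.pi ^ 2 / 12 := by linarith
  rw [← htsum]
  exact hfs.hasSum


noncomputable def F (n : ℕ) (x : ℝ) : ℝ := ((-1:ℝ)^n / ((n:ℝ)+1)) * x ^ (-(n:ℝ)-2)

lemma hFint (n : ℕ) : IntegrableOn (F n) (Ioi (1:ℝ)) := by
  exact (integrableOn_Ioi_rpow_of_lt (by linarith [(n.cast_nonneg : (0:ℝ) ≤ n)] : -(n:ℝ)-2 < -1) one_pos).const_mul _

lemma hrpow_int (n : ℕ) : ∫ x in Ioi (1:ℝ), x ^ (-(n:ℝ)-2) = 1 / ((n:ℝ)+1) := by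
  rw [integral_Ioi_rpow_of_lt (by linarith [(n.cast_nonneg : (0:ℝ) ≤ n)] : -(n:ℝ)-2 < -1) one_pos, Real.one_rpow]
  rw [show -(n:ℝ)-2+1 = -((n:ℝ)+1) by ring, div_neg, neg_div, neg_neg]

lemma hFval (n : ℕ) : ∫ x in Ioi (1:ℝ), F n x = (-1:ℝ)^n / ((n:ℝ)+1)^2 := by
  unfold F
  rw [MeasureTheory.integral_const_mul, hrpow_int]
  rw [div_mul_div_comm, mul_one, sq]

lemma hFnorm (n : ℕ) : ∫ x in Ioi (1:ℝ), ‖F n x‖ = 1 / ((n:ℝ)+1)^2 := by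
  rw [setIntegral_congr_fun (g := fun x => (1/((n:ℝ)+1)) * x ^ (-(n:ℝ)-2)) measurableSet_Ioi ?_]
  · rw [MeasureTheory.integral_const_mul, hrpow_int, div_mul_div_comm, mul_one, sq]
  · intro x hx
    have hx0 : (0:ℝ) < x := lt_trans one_pos hx
    simp only [F, norm_mul, norm_div, norm_pow, norm_neg, norm_one, one_pow, Real.norm_eq_abs,
      abs_of_nonneg (Real.rpow_nonneg hx0.le _), abs_of_nonneg (by positivity : (0:ℝ) ≤ (n:ℝ)+1),
      abs_one]

lemma hptwise {v : ℝ} (hv : 1 < v) :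
    HasSum (fun n => F n v) (Real.log (1 + 1/v) / v) := by
  have hv0 : (0:ℝ) < v := lt_trans one_pos hv
  have h1 : |(-1)/v| < 1 := by
    rw [abs_div, abs_neg, abs_one, abs_of_pos hv0, div_lt_one hv0]
    exact hv
  have h2 := (Real.hasSum_pow_div_log_of_abs_lt_one h1).neg.div_const v
  have h3 : 1 - (-1)/v = 1 + 1/v := by ring
  rw [h3, neg_neg] at h2
  convert h2 using 2 with n
  · rfl
  unfold F
  have hrp : v ^ (-(n:ℝ)-2) = (v ^ (n+2 : ℕ))⁻¹ := by
    rw [show -(n:ℝ)-2 = -((n+2:ℕ):ℝ) by push_cast; ring, Real.rpow_neg hv0.le, Real.rpow_natCast]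
  rw [hrp, div_pow]
  have hn1 : ((n:ℝ)+1) ≠ 0 := by positivity
  field_simp
  simp only [pow_succ]
  ring

lemma hsummable : Summable (fun n : ℕ => 1 / ((n:ℝ)+1)^2) := by
  have h0 : Summable (fun n : ℕ => 1 / ((n:ℝ))^2) :=
    Real.summable_one_div_nat_pow.mpr one_lt_two
  have h1 := (summable_nat_add_iff 1).2 h0
  convert h1 using 2 with n
  · rfl
  push_cast
  ring_nf

lemma hmeas : Measurable (fun v : ℝ => Real.log (1 + 1/v) / v) := by
  exact (Real.measurable_log.comp (measurable_const.add (measurable_const.div measurable_id))).div measurable_id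

lemma hint : IntegrableOn (fun v : ℝ => Real.log (1 + 1/v) / v) (Ioi (1:ℝ)) := by
  apply Integrable.mono (g := fun x : ℝ => x ^ (-2:ℝ))
    (integrableOn_Ioi_rpow_of_lt (by norm_num) one_pos)
    hmeas.aestronglyMeasurable.restrict
  rw [ae_restrict_iff' measurableSet_Ioi]
  filter_upwards with x hx
  have hx0 : (0:ℝ) < x := lt_trans one_pos hx
  have hinv : (0:ℝ) < 1/x := by positivity
  have hlog0 : 0 ≤ Real.log (1 + 1/x) := Real.log_nonneg (by linarith)
  have hlog1 : Real.log (1 + 1/x) ≤ 1/x := by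
    have := Real.log_le_sub_one_of_pos (show (0:ℝ) < 1 + 1/x by linarith)
    linarith
  have hr : x ^ (-2:ℝ) = (x^2)⁻¹ := by
    rw [show (-2:ℝ) = -((2:ℕ):ℝ) by norm_num, Real.rpow_neg hx0.le, Real.rpow_natCast]
  rw [Real.norm_eq_abs, Real.norm_eq_abs, abs_of_nonneg (by positivity),
    abs_of_nonneg (Real.rpow_nonneg hx0.le _), hr]
  rw [div_le_iff₀ hx0, inv_mul_eq_div, le_div_iff₀ (by positivity), sq]
  calc Real.log (1 + 1/x) * (x * x) ≤ (1/x) * (x * x) := by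
        apply mul_le_mul_of_nonneg_right hlog1 (by positivity)
    _ = x := by field_simp

lemma hval : ∫ x in Ioi (1:ℝ), Real.log (1 + 1/x) / x = Real.pi ^ 2 / 12 := by
  have hFsum : Summable (fun n : ℕ => ∫ x in Ioi (1:ℝ), ‖F n x‖) := by
    simpa only [hFnorm] using hsummable
  have hmain := MeasureTheory.integral_tsum_of_summable_integral_norm
    (μ := volume.restrict (Ioi (1:ℝ))) (F := F) hFint hFsum
  have hL : ∑' n, ∫ x in Ioi (1:ℝ), F n x = Real.pi ^ 2 / 12 := by
    simp only [hFval]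
    exact eta_two.tsum_eq
  have hR : ∫ x in Ioi (1:ℝ), (∑' n, F n x) = ∫ x in Ioi (1:ℝ), Real.log (1 + 1/x) / x :=
    setIntegral_congr_fun measurableSet_Ioi (fun x hx => (hptwise hx).tsum_eq)
  rw [← hR, ← hmain, hL]

theorem stmt6 :
    Tendsto (fun u : ℝ => ∫ v in (1:ℝ)..u, Real.log (1 + 1 / v) / (v * Real.log 2)) atTop
      (nhds (Real.pi ^ 2 / (12 * Real.log 2))) := by
  have key : Tendsto (fun u : ℝ => ∫ v in (1:ℝ)..u, Real.log (1 + 1 / v) / v) atTop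
      (nhds (Real.pi ^ 2 / 12)) := by
    have h := MeasureTheory.intervalIntegral_tendsto_integral_Ioi 1 hint tendsto_id
    rwa [hval] at h
  have heq : (fun u : ℝ => ∫ v in (1:ℝ)..u, Real.log (1 + 1 / v) / (v * Real.log 2))
      = fun u : ℝ => (∫ v in (1:ℝ)..u, Real.log (1 + 1 / v) / v) / Real.log 2 := by
    ext u
    rw [← intervalIntegral.integral_div]
    congr 1; ext v; rw [div_div]
  rw [heq, show Real.pi ^ 2 / (12 * Real.log 2) = (Real.pi ^ 2 / 12) / Real.log 2 by rw [div_div]]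
  exact key.div_const _
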